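/- Let (a_n)_{n≥0} be a real-valued general monotone sequence with constants C > 1 and λ > 1. If the series ∑_{n=0}^∞ a_n converges, then n·a_n → 0 as n → ∞. -/

import Mathlib

open Filter

/-- `(a_n)` is a general monotone sequence with constants `C` and `l`: it vanishes at infinity
and for every `n ≥ 1`, `∑_{k=n}^{2n} |a_k − a_{k+1}| ≤ C·∑_{n/l ≤ k ≤ ln} |a_k|/k`. -/
def GMSeq (C l : ℝ) (a : ℕ → ℝ) : Prop :=
  Filter.Tendsto a Filter.atTop (nhds 0) ∧
  ∀ n : ℕ, 1 ≤ n → ∑ k ∈ Finset.Icc n (2*n), |a k - a (k+1)| ≤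
    C * ∑ k ∈ Finset.Icc ⌈(n:ℝ)/l⌉₊ ⌊l*(n:ℝ)⌋₊, |a k| / (k:ℝ)

namespace AO

open Finset


def Vv (a : ℕ → ℝ) (p q : ℕ) : ℝ := ∑ k ∈ Finset.Ico p q, |a k - a (k + 1)|

def Sv (a : ℕ → ℝ) (p q : ℕ) : ℝ := ∑ k ∈ Finset.Icc p q, a k

def Tv (a : ℕ → ℝ) (p q : ℕ) : ℝ := ∑ k ∈ Finset.Icc p q, |a k|

def Aa (a : ℕ → ℝ) (n : ℕ) : ℝ := ∑ k ∈ Finset.Icc n (2 * n), |a k - a (k + 1)|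

noncomputable def Gv (a : ℕ → ℝ) (l : ℝ) (n : ℕ) : ℝ :=
  Tv a ⌈(n : ℝ) / l⌉₊ ⌊l * (n : ℝ)⌋₊

lemma Vv_nonneg (a : ℕ → ℝ) (p q : ℕ) : 0 ≤ Vv a p q :=
  Finset.sum_nonneg fun _ _ => abs_nonneg _

lemma Tv_nonneg (a : ℕ → ℝ) (p q : ℕ) : 0 ≤ Tv a p q :=
  Finset.sum_nonneg fun _ _ => abs_nonneg _

lemma Gv_nonneg (a : ℕ → ℝ) (l : ℝ) (n : ℕ) : 0 ≤ Gv a l n := Tv_nonneg _ _ _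

lemma Vv_mono (a : ℕ → ℝ) {p q p' q' : ℕ} (h1 : p' ≤ p) (h2 : q ≤ q') :
    Vv a p q ≤ Vv a p' q' :=
  Finset.sum_le_sum_of_subset_of_nonneg (Finset.Ico_subset_Ico h1 h2)
    fun _ _ _ => abs_nonneg _

lemma tele (a : ℕ → ℝ) (i k : ℕ) (h : i ≤ k) :
    ∑ j ∈ Finset.Ico i k, (a j - a (j + 1)) = a i - a k := by
  induction k, h using Nat.le_induction with
  | base => simp
  | succ k hk ih => rw [Finset.sum_Ico_succ_top hk, ih]; ring

lemma diff_le (a : ℕ → ℝ) {p i k q : ℕ} (h1 : p ≤ i) (h2 : i ≤ k) (h3 : k ≤ q) :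
    |a i - a k| ≤ Vv a p q := by
  rw [← tele a i k h2]
  exact (Finset.abs_sum_le_sum_abs _ _).trans
    (Finset.sum_le_sum_of_subset_of_nonneg (Finset.Ico_subset_Ico h1 h3)
      fun _ _ _ => abs_nonneg _)

lemma diff_le' (a : ℕ → ℝ) {p i k q : ℕ} (hi : i ∈ Finset.Icc p q) (hk : k ∈ Finset.Icc p q) :
    |a i - a k| ≤ Vv a p q := by
  simp only [Finset.mem_Icc] at hi hk
  rcases le_total i k with h | h
  · exact diff_le a hi.1 h hk.2
  · rw [abs_sub_comm]; exact diff_le a hk.1 h hi.2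

lemma lemma1 (a : ℕ → ℝ) (p q : ℕ) :
    Tv a p q ≤ |Sv a p q| + ((Finset.Icc p q).card : ℝ) * Vv a p q := by
  have hV := Vv_nonneg a p q
  have hcard : (0:ℝ) ≤ ((Finset.Icc p q).card : ℝ) := Nat.cast_nonneg _
  by_cases h1 : ∀ k ∈ Finset.Icc p q, 0 ≤ a k
  · have he : Tv a p q = |Sv a p q| := by
      rw [Tv, Sv, abs_of_nonneg (Finset.sum_nonneg h1)]
      exact Finset.sum_congr rfl fun k hk => abs_of_nonneg (h1 k hk)
    nlinarith
  · by_cases h2 : ∀ k ∈ Finset.Icc p q, a k ≤ 0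
    · have he : Tv a p q = |Sv a p q| := by
        rw [Tv, Sv, abs_of_nonpos (Finset.sum_nonpos h2), ← Finset.sum_neg_distrib]
        exact Finset.sum_congr rfl fun k hk => abs_of_nonpos (h2 k hk)
      nlinarith
    · push_neg at h1 h2
      obtain ⟨i, hi, hai⟩ := h1
      obtain ⟨j, hj, haj⟩ := h2
      have key : ∀ k ∈ Finset.Icc p q, |a k| ≤ Vv a p q := by
        intro k hk
        rcases le_or_gt 0 (a k) with h | h
        · have hd := diff_le' a hk hi
          have : a k - a i ≤ |a k - a i| := le_abs_self _
          rw [abs_of_nonneg h]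
          linarith
        · have hd := diff_le' a hj hk
          have : a j - a k ≤ |a j - a k| := le_abs_self _
          rw [abs_of_neg h]
          linarith
      have h3 : Tv a p q ≤ (Finset.Icc p q).card • Vv a p q :=
        Finset.sum_le_card_nsmul _ _ _ key
      rw [nsmul_eq_mul] at h3
      have := abs_nonneg (Sv a p q)
      linarith


lemma lemma2 (a : ℕ → ℝ) (N m : ℕ) (hm : 1 ≤ m) (ε : ℝ)
    (hN : ∀ p q, N ≤ p → |Sv a p q| ≤ ε) :
    ∀ d p, N ≤ p →
      Tv a p (p + d) ≤ (((d / m : ℕ) : ℝ) + 1) * ε + (m : ℝ) * Vv a p (p + d) := by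
  intro d
  induction d using Nat.strong_induction_on with
  | _ d ih =>
    intro p hp
    have hε : 0 ≤ ε := le_trans (abs_nonneg _) (hN p p hp)
    have hm0 : (0:ℝ) ≤ (m:ℝ) := Nat.cast_nonneg _
    rcases lt_or_ge d m with hdm | hdm
    · have h1 := lemma1 a p (p + d)
      have hcn : (Finset.Icc p (p + d)).card = d + 1 := by rw [Nat.card_Icc]; omega
      have hcard : ((Finset.Icc p (p + d)).card : ℝ) ≤ (m : ℝ) := by
        rw [hcn]; exact_mod_cast hdm
      have hdiv : d / m = 0 := Nat.div_eq_of_lt hdm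
      have hS := hN p (p + d) hp
      have hV := Vv_nonneg a p (p + d)
      rw [hdiv]
      push_cast
      nlinarith
    · obtain ⟨m', rfl⟩ : ∃ m', m = m' + 1 := ⟨m - 1, by omega⟩
      have hsplit : Tv a p (p + d) = Tv a p (p + m') + Tv a (p + m' + 1) (p + d) := by
        rw [Tv, Tv, Tv, ← Finset.Ico_add_one_right_eq_Icc, ← Finset.Ico_add_one_right_eq_Icc, ← Finset.Ico_add_one_right_eq_Icc,
          ← Finset.sum_Ico_consecutive _ (by omega : p ≤ p + m' + 1)
            (by omega : p + m' + 1 ≤ (p + d) + 1)]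
      -- chunk 1
      have h1 := lemma1 a p (p + m')
      have hc1 : (Finset.Icc p (p + m')).card = m' + 1 := by rw [Nat.card_Icc]; omega
      have hS1 := hN p (p + m') hp
      -- chunk 2 via ih
      have hlt : d - (m' + 1) < d := by omega
      have h2 := ih (d - (m' + 1)) hlt (p + m' + 1) (by omega)
      have heq : p + m' + 1 + (d - (m' + 1)) = p + d := by omega
      rw [heq] at h2
      -- variation combination
      have hdisj : Disjoint (Finset.Ico p (p + m')) (Finset.Ico (p + m' + 1) (p + d)) := by
        rw [Finset.disjoint_left]
        intro x hx hx'
        simp only [Finset.mem_Ico] at hx hx'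
        omega
      have hVsum : Vv a p (p + m') + Vv a (p + m' + 1) (p + d) ≤ Vv a p (p + d) := by
        rw [Vv, Vv, Vv, ← Finset.sum_union hdisj]
        refine Finset.sum_le_sum_of_subset_of_nonneg ?_ fun _ _ _ => abs_nonneg _
        refine Finset.union_subset (Finset.Ico_subset_Ico le_rfl (by omega))
          (Finset.Ico_subset_Ico (by omega) le_rfl)
      have hdiv : d / (m' + 1) = (d - (m' + 1)) / (m' + 1) + 1 :=
        Nat.div_eq_sub_div (by omega) hdm
      have hV1 := Vv_nonneg a p (p + m')
      have hV2 := Vv_nonneg a (p + m' + 1) (p + d)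
      rw [hsplit, hdiv]
      rw [hc1] at h1
      push_cast at h1 h2 ⊢
      nlinarith

lemma lemma2' (a : ℕ → ℝ) (N m : ℕ) (hm : 1 ≤ m) (ε : ℝ)
    (hN : ∀ p q, N ≤ p → |Sv a p q| ≤ ε) {p q : ℕ} (hpq : p ≤ q) (hp : N ≤ p) :
    Tv a p q ≤ ((((q - p) / m : ℕ) : ℝ) + 1) * ε + (m : ℝ) * Vv a p q := by
  have := lemma2 a N m hm ε hN (q - p) p hp
  rwa [Nat.add_sub_cancel' hpq] at this

lemma geo (a : ℕ → ℝ) (p : ℕ) :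
    ∀ L : ℕ, Vv a p (2 ^ L * p) = ∑ i ∈ Finset.range L, Vv a (2 ^ i * p) (2 ^ (i + 1) * p)
  | 0 => by simp [Vv]
  | (L + 1) => by
      have h1 : p ≤ 2 ^ L * p := Nat.le_mul_of_pos_left p (Nat.two_pow_pos L)
      have h2 : 2 ^ L * p ≤ 2 ^ (L + 1) * p := by
        have : (2:ℕ) ^ L ≤ 2 ^ (L + 1) := Nat.pow_le_pow_right (by norm_num) (Nat.le_succ L)
        exact Nat.mul_le_mul_right p this
      rw [Finset.sum_range_succ, ← geo a p L, Vv, Vv, Vv,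
        Finset.sum_Ico_consecutive _ h1 h2]

lemma lemma4 (a : ℕ → ℝ) (p q L : ℕ) (hq : q ≤ 2 ^ L * p) :
    Vv a p q ≤ ∑ i ∈ Finset.range L, Aa a (2 ^ i * p) := by
  refine le_trans (Vv_mono a le_rfl hq) ?_
  rw [geo a p L]
  refine Finset.sum_le_sum fun i _ => ?_
  rw [Aa, ← Finset.Ico_add_one_right_eq_Icc]
  refine Finset.sum_le_sum_of_subset_of_nonneg (Finset.Ico_subset_Ico le_rfl ?_)
    fun _ _ _ => abs_nonneg _
  have h : 2 ^ (i + 1) * p = 2 * (2 ^ i * p) := by ring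
  omega

lemma lemma3 (a : ℕ → ℝ) (C l : ℝ) (hC : 1 < C) (hl : 1 < l)
    (hgm : ∀ n : ℕ, 1 ≤ n → ∑ k ∈ Finset.Icc n (2*n), |a k - a (k+1)| ≤
      C * ∑ k ∈ Finset.Icc ⌈(n:ℝ)/l⌉₊ ⌊l*(n:ℝ)⌋₊, |a k| / (k:ℝ))
    (n : ℕ) (hn : 1 ≤ n) :
    Aa a n ≤ C * l / n * Gv a l n := by
  have hl0 : (0:ℝ) < l := by linarith
  have hn0 : (0:ℝ) < n := by exact_mod_cast hn
  have hq : (0:ℝ) < (n:ℝ)/l := div_pos hn0 hl0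
  have key : ∑ k ∈ Finset.Icc ⌈(n:ℝ)/l⌉₊ ⌊l*(n:ℝ)⌋₊, |a k| / (k:ℝ) ≤
      l / n * Tv a ⌈(n:ℝ)/l⌉₊ ⌊l*(n:ℝ)⌋₊ := by
    rw [Tv, Finset.mul_sum]
    refine Finset.sum_le_sum fun k hk => ?_
    have hk1 : (n:ℝ)/l ≤ (k:ℝ) := by
      have h := (Finset.mem_Icc.mp hk).1
      calc (n:ℝ)/l ≤ (⌈(n:ℝ)/l⌉₊ : ℝ) := Nat.le_ceil _
        _ ≤ k := by exact_mod_cast h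
    rw [div_eq_mul_inv, mul_comm (l / n)]
    refine mul_le_mul_of_nonneg_left ?_ (abs_nonneg _)
    rw [← one_div, ← one_div_div (n:ℝ) l]
    exact one_div_le_one_div_of_le hq hk1
  calc Aa a n ≤ C * ∑ k ∈ Finset.Icc ⌈(n:ℝ)/l⌉₊ ⌊l*(n:ℝ)⌋₊, |a k| / (k:ℝ) := hgm n hn
    _ ≤ C * (l / n * Tv a ⌈(n:ℝ)/l⌉₊ ⌊l*(n:ℝ)⌋₊) :=
        mul_le_mul_of_nonneg_left key (by linarith)
    _ = C * l / n * Gv a l n := by rw [Gv]; ring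

lemma Gv_triv (a : ℕ → ℝ) (l : ℝ) (hl : 1 < l) (B : ℝ) (hB : ∀ k, |a k| ≤ B) (n : ℕ) :
    Gv a l n ≤ (l * n + 1) * B := by
  have hB0 : 0 ≤ B := le_trans (abs_nonneg _) (hB 0)
  have h1 : Gv a l n ≤ (Finset.Icc ⌈(n:ℝ)/l⌉₊ ⌊l*(n:ℝ)⌋₊).card • B := by
    rw [Gv, Tv]
    exact Finset.sum_le_card_nsmul _ _ _ fun k _ => hB k
  rw [nsmul_eq_mul] at h1
  refine le_trans h1 (mul_le_mul_of_nonneg_right ?_ hB0)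
  rw [Nat.card_Icc]
  have h2 : ((⌊l*(n:ℝ)⌋₊ + 1 - ⌈(n:ℝ)/l⌉₊ : ℕ) : ℝ) ≤ ((⌊l*(n:ℝ)⌋₊ + 1 : ℕ) : ℝ) := by
    exact_mod_cast Nat.sub_le _ _
  have h3 : ((⌊l*(n:ℝ)⌋₊ : ℕ) : ℝ) ≤ l * n := by
    refine Nat.floor_le ?_
    have : (0:ℝ) ≤ (n:ℝ) := Nat.cast_nonneg n
    nlinarith
  refine le_trans h2 ?_
  push_cast
  linarith

lemma cauchy (a : ℕ → ℝ)
    (hconv : ∃ S : ℝ, Tendsto (fun N : ℕ => ∑ n ∈ Finset.range N, a n) atTop (nhds S)) :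
    ∀ ε : ℝ, 0 < ε → ∃ N : ℕ, ∀ p q, N ≤ p → |Sv a p q| ≤ ε := by
  obtain ⟨S, hS⟩ := hconv
  intro ε hε
  rw [Metric.tendsto_atTop] at hS
  obtain ⟨N, hN⟩ := hS (ε/2) (by linarith)
  refine ⟨N, fun p q hp => ?_⟩
  rcases le_or_gt p q with h | h
  · have e1 : Sv a p q = (∑ n ∈ Finset.range (q+1), a n) - ∑ n ∈ Finset.range p, a n := by
      rw [Sv, ← Finset.Ico_add_one_right_eq_Icc, Finset.sum_Ico_eq_sub _ (by omega)]
    have h1 := hN (q+1) (by omega)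
    have h2 := hN p hp
    rw [Real.dist_eq] at h1 h2
    have e2 : Sv a p q = ((∑ n ∈ Finset.range (q+1), a n) - S)
        - ((∑ n ∈ Finset.range p, a n) - S) := by rw [e1]; ring
    rw [e2]
    calc |_| ≤ |(∑ n ∈ Finset.range (q+1), a n) - S| + |(∑ n ∈ Finset.range p, a n) - S| :=
          abs_sub _ _
      _ ≤ ε := by linarith
  · rw [Sv, Finset.Icc_eq_empty (by omega)]
    simp
    linarith

lemma lemma5 (a : ℕ → ℝ) (C l : ℝ) (hC : 1 < C) (hl : 1 < l)
    (hgm : ∀ n : ℕ, 1 ≤ n → ∑ k ∈ Finset.Icc n (2*n), |a k - a (k+1)| ≤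
      C * ∑ k ∈ Finset.Icc ⌈(n:ℝ)/l⌉₊ ⌊l*(n:ℝ)⌋₊, |a k| / (k:ℝ))
    (L : ℕ) (hL : l * l ≤ (2:ℝ) ^ L)
    (ε : ℝ) (N : ℕ) (hN : ∀ p q, N ≤ p → |Sv a p q| ≤ ε)
    (K η : ℝ) (hK : 0 ≤ K) (hη : 0 ≤ η)
    (hH : ∀ k : ℕ, Gv a l k ≤ K + η * k)
    (m : ℕ) (hm : 1 ≤ m) (n : ℕ) (hn : 1 ≤ n)
    (hNp : N ≤ ⌈(n:ℝ)/l⌉₊) :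
    Gv a l n ≤ ((((⌊l*(n:ℝ)⌋₊ - ⌈(n:ℝ)/l⌉₊) / m : ℕ) : ℝ) + 1) * ε
      + (m : ℝ) * (2 * C * l * K / (⌈(n:ℝ)/l⌉₊ : ℝ) + (L : ℝ) * C * l * η) := by
  set p' := ⌈(n:ℝ)/l⌉₊ with hp'def
  set q' := ⌊l*(n:ℝ)⌋₊ with hq'def
  have hl0 : (0:ℝ) < l := by linarith
  have hC0 : (0:ℝ) < C := by linarith
  have hn0 : (0:ℝ) < n := by exact_mod_cast hn
  have hdp : (0:ℝ) < (n:ℝ)/l := div_pos hn0 hl0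
  have hp1 : 1 ≤ p' := Nat.ceil_pos.mpr hdp
  have hp'0 : (0:ℝ) < (p' : ℝ) := by exact_mod_cast hp1
  have hpn : p' ≤ n := by
    rw [hp'def]
    refine Nat.ceil_le.mpr ?_
    rw [div_le_iff₀ hl0]
    nlinarith
  have hnq : n ≤ q' := by
    rw [hq'def]
    refine Nat.le_floor ?_
    nlinarith
  have hpq : p' ≤ q' := le_trans hpn hnq
  have hq2L : q' ≤ 2 ^ L * p' := by
    have h1 : (q' : ℝ) ≤ l * n := Nat.floor_le (by nlinarith)
    have h2 : (n : ℝ) / l ≤ p' := Nat.le_ceil _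
    have h3 : (q' : ℝ) ≤ ((2:ℝ) ^ L) * p' := by
      calc (q':ℝ) ≤ l * n := h1
        _ = (l * l) * ((n:ℝ)/l) := by field_simp
        _ ≤ (2:ℝ)^L * p' := by
            refine mul_le_mul hL h2 hdp.le ?_
            positivity
    have h4 : ((2 ^ L * p' : ℕ) : ℝ) = (2:ℝ)^L * p' := by push_cast; ring
    rw [← h4] at h3
    exact_mod_cast h3
  -- step 1
  have step1 := lemma2' a N m hm ε hN hpq hNp
  -- step 3
  have step3 := lemma4 a p' q' L hq2L
  -- step 4
  have step4 : ∑ i ∈ Finset.range L, Aa a (2 ^ i * p') ≤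
      2 * C * l * K / p' + (L:ℝ) * C * l * η := by
    have per : ∀ i ∈ Finset.range L, Aa a (2 ^ i * p') ≤
        C * l * K / (p':ℝ) * (1/2:ℝ)^i + C * l * η := by
      intro i _
      have hx1 : 1 ≤ 2 ^ i * p' := Nat.one_le_iff_ne_zero.mpr (by positivity)
      have h3 := lemma3 a C l hC hl hgm (2 ^ i * p') hx1
      have hx0 : (0:ℝ) < ((2 ^ i * p' : ℕ) : ℝ) := by exact_mod_cast hx1
      have h4 := hH (2 ^ i * p')
      have h5 : Aa a (2 ^ i * p') ≤
          C * l / ((2 ^ i * p' : ℕ):ℝ) * (K + η * ((2 ^ i * p' : ℕ):ℝ)) := by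
        refine h3.trans (mul_le_mul_of_nonneg_left h4 ?_)
        positivity
      have h6 : C * l / ((2 ^ i * p' : ℕ):ℝ) * (K + η * ((2 ^ i * p' : ℕ):ℝ))
          = C * l * K / (p':ℝ) * (1/2:ℝ)^i + C * l * η := by
        have hcast : ((2 ^ i * p' : ℕ):ℝ) = 2^i * (p':ℝ) := by push_cast; ring
        rw [hcast, one_div_pow]
        have h2i : (0:ℝ) < 2^i := by positivity
        field_simp
      linarith [h5, h6.le, h6.ge]
    have hsum := Finset.sum_le_sum per
    have hgeom : ∑ i ∈ Finset.range L, (C * l * K / (p':ℝ) * (1/2:ℝ)^i + C * l * η)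
        ≤ 2 * C * l * K / p' + (L:ℝ) * C * l * η := by
      rw [Finset.sum_add_distrib, ← Finset.mul_sum, Finset.sum_const, Finset.card_range,
        nsmul_eq_mul]
      have hg : ∑ i ∈ Finset.range L, (1/2:ℝ)^i ≤ 2 := sum_geometric_two_le L
      have hcoef : (0:ℝ) ≤ C * l * K / p' := by positivity
      have hrw : 2 * C * l * K / (p':ℝ) = (C * l * K / (p':ℝ)) * 2 := by ring
      rw [hrw]
      nlinarith [mul_le_mul_of_nonneg_left hg hcoef]
    exact hsum.trans hgeom
  have hVle : Vv a p' q' ≤ 2 * C * l * K / p' + (L:ℝ) * C * l * η := step3.trans step4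
  have hm0 : (0:ℝ) ≤ (m:ℝ) := Nat.cast_nonneg _
  calc Gv a l n = Tv a p' q' := rfl
    _ ≤ ((((q' - p') / m : ℕ) : ℝ) + 1) * ε + (m : ℝ) * Vv a p' q' := step1
    _ ≤ ((((q' - p') / m : ℕ) : ℝ) + 1) * ε
        + (m : ℝ) * (2 * C * l * K / p' + (L:ℝ) * C * l * η) := by
          have := mul_le_mul_of_nonneg_left hVle hm0
          linarith

set_option maxHeartbeats 8000000 in
lemma phase1 (a : ℕ → ℝ) (C l : ℝ) (hC : 1 < C) (hl : 1 < l)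
    (hgm : ∀ n : ℕ, 1 ≤ n → ∑ k ∈ Finset.Icc n (2*n), |a k - a (k+1)| ≤
      C * ∑ k ∈ Finset.Icc ⌈(n:ℝ)/l⌉₊ ⌊l*(n:ℝ)⌋₊, |a k| / (k:ℝ))
    (hcauchy : ∀ ε : ℝ, 0 < ε → ∃ N : ℕ, ∀ p q, N ≤ p → |Sv a p q| ≤ ε)
    (B : ℝ) (hB : ∀ k, |a k| ≤ B)
    (L : ℕ) (hL1 : 1 ≤ L) (hLR : (1:ℝ) ≤ (L:ℝ)) (hL : l * l ≤ (2:ℝ) ^ L) :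
    ∃ K : ℝ, 0 ≤ K ∧ ∀ k : ℕ, AO.Gv a l k ≤ K := by
  have hC0 : (0:ℝ) < C := by linarith
  have hl0 : (0:ℝ) < l := by linarith
  have hB0 : 0 ≤ B := le_trans (abs_nonneg _) (hB 0)
  obtain ⟨N₀, hN₀⟩ := hcauchy 1 one_pos
  have hLR0 : (0:ℝ) < (L:ℝ) := by linarith
  have hden : (0:ℝ) < 8 * C * l * l * L := by
    have h := mul_pos (mul_pos (mul_pos (by linarith : (0:ℝ) < 8*C) hl0) hl0) hLR0
    nlinarith [h]
  obtain ⟨c₃, hc₃0, hc₃mul⟩ : ∃ c : ℝ, 0 < c ∧ c * (8 * C * l * l * L) = 1 :=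
    ⟨1 / (8 * C * l * l * L), div_pos one_pos hden, by field_simp⟩
  obtain ⟨M₀, hM₀⟩ : ∃ M : ℕ, max (l * (N₀:ℝ)) (1 / c₃) ≤ (M:ℝ) :=
    ⟨⌈max (l * (N₀:ℝ)) (1 / c₃)⌉₊, Nat.le_ceil _⟩
  have hlc₃ : 0 ≤ l / c₃ := div_nonneg hl0.le hc₃0.le
  obtain ⟨n₂, Kb, hn₂1, hKb0, hKbsm⟩ :
      ∃ (n₂ : ℕ) (Kb : ℝ), M₀ + 1 ≤ n₂ ∧ 0 ≤ Kb ∧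
        ∀ n : ℕ, n < n₂ → AO.Gv a l n ≤ Kb := by
    refine ⟨M₀ + 1, (l * ((M₀:ℝ) + 1) + 1) * B, le_rfl, ?_, ?_⟩
    · have hM0 : (0:ℝ) ≤ (M₀:ℝ) := Nat.cast_nonneg _
      exact mul_nonneg (by nlinarith) hB0
    · intro n hn
      have h1 := AO.Gv_triv a l hl B hB n
      have h3 : (n:ℝ) ≤ (M₀:ℝ) + 1 := by exact_mod_cast Nat.le_of_lt_succ hn |>.trans (Nat.le_succ M₀)
      nlinarith [mul_nonneg (mul_nonneg hl0.le (sub_nonneg.mpr h3)) hB0]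
  have hn₂M₀ : ∀ n : ℕ, n₂ ≤ n → max (l * (N₀:ℝ)) (1 / c₃) ≤ (n:ℝ) := by
    intro n hn
    refine le_trans hM₀ ?_
    exact_mod_cast le_trans (le_trans (Nat.le_succ M₀) hn₂1) hn
  obtain ⟨K, hK0, hKbK, hBK, hKhalf⟩ :
      ∃ K : ℝ, 0 ≤ K ∧ Kb ≤ K ∧ B ≤ K ∧ l / c₃ + 1 ≤ K / 2 :=
    ⟨2 * ((l / c₃ + 1) + Kb + B), by linarith, by linarith, by linarith, by linarith⟩
  obtain ⟨η₀, hη₀0, hbase⟩ :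
      ∃ η₀ : ℝ, 0 ≤ η₀ ∧ ∀ k : ℕ, AO.Gv a l k ≤ K + η₀ * k := by
    refine ⟨l * B, mul_nonneg hl0.le hB0, fun k => ?_⟩
    have h1 := AO.Gv_triv a l hl B hB k
    have hk0 : (0:ℝ) ≤ (k:ℝ) := Nat.cast_nonneg k
    nlinarith
  -- Phase 1 : uniform boundedness of Gv
  have hP : ∀ j : ℕ, ∀ k : ℕ, AO.Gv a l k ≤ K + (η₀ / 2 ^ j) * k := by
    intro j
    induction j with
    | zero =>
      intro k
      have h2 : (η₀ / 2 ^ 0) * k = η₀ * k := by norm_num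
      rw [h2]
      exact hbase k
    | succ j ih =>
      intro n
      have hpow : (0:ℝ) < 2 ^ j := by positivity
      rcases lt_or_ge n n₂ with hsmall | hbig
      · have h2 := hKbsm n hsmall
        have h4 : 0 ≤ (η₀ / 2 ^ (j+1)) * n := by positivity
        linarith
      · have hn1 : 1 ≤ n := le_trans (le_trans (Nat.le_add_left 1 M₀) hn₂1) hbig
        have hnR0 : (0:ℝ) < n := by exact_mod_cast hn1
        have hmax : max (l * (N₀:ℝ)) (1 / c₃) ≤ (n:ℝ) := hn₂M₀ n hbig
        have hlN : l * N₀ ≤ (n:ℝ) := le_trans (le_max_left _ _) hmax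
        have hinv : 1 / c₃ ≤ (n:ℝ) := le_trans (le_max_right _ _) hmax
        have hc₃n : 1 ≤ c₃ * n := by
          rw [div_le_iff₀ hc₃0] at hinv
          nlinarith
        obtain ⟨m, hm1, hmlb, hmub⟩ :
            ∃ m : ℕ, 1 ≤ m ∧ c₃ * n ≤ (m:ℝ) ∧ (m:ℝ) ≤ 2 * (c₃ * n) := by
          refine ⟨⌈c₃ * (n:ℝ)⌉₊, Nat.ceil_pos.mpr (by nlinarith), Nat.le_ceil _, ?_⟩
          have h6 := (Nat.ceil_lt_add_one (by positivity : (0:ℝ) ≤ c₃ * (n:ℝ))).le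
          linarith
        have hNp : N₀ ≤ ⌈(n:ℝ)/l⌉₊ := by
          have h1 : (N₀:ℝ) ≤ (n:ℝ) / l := by rw [le_div_iff₀ hl0]; nlinarith
          have h2 : (N₀:ℝ) ≤ (⌈(n:ℝ)/l⌉₊:ℝ) := le_trans h1 (Nat.le_ceil _)
          exact_mod_cast h2
        have h5 := AO.lemma5 a C l hC hl hgm L hL 1 N₀ hN₀ K (η₀ / 2^j) hK0
          (by positivity) ih m hm1 n hn1 hNp
        have hp'lb : (n:ℝ)/l ≤ ((⌈(n:ℝ)/l⌉₊ : ℕ):ℝ) := Nat.le_ceil _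
        have hq'ub : ((⌊l*(n:ℝ)⌋₊ : ℕ):ℝ) ≤ l * n := Nat.floor_le (by nlinarith)
        generalize hg1 : (⌈(n:ℝ)/l⌉₊ : ℕ) = p' at h5 hp'lb
        generalize hg2 : (⌊l*(n:ℝ)⌋₊ : ℕ) = q' at h5 hq'ub
        clear hg1 hg2
        have hp'0 : (0:ℝ) < p' := lt_of_lt_of_le (div_pos hnR0 hl0) hp'lb
        have hnlp' : (n:ℝ) ≤ l * p' := by
          rw [div_le_iff₀ hl0] at hp'lb; nlinarith
        -- term 1
        have hA : (((q' - p') / m : ℕ) : ℝ) ≤ l / c₃ := by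
          have h1 : (((q' - p') / m : ℕ) : ℝ) ≤ ((q' - p' : ℕ):ℝ) / (m:ℝ) := Nat.cast_div_le
          have h2 : ((q' - p' : ℕ):ℝ) ≤ (q':ℝ) := by exact_mod_cast Nat.sub_le q' p'
          have h3 : ((q' - p' : ℕ):ℝ) / (m:ℝ) ≤ (l * n) / (c₃ * n) := by
            apply div_le_div₀ (by nlinarith) (h2.trans hq'ub) (by nlinarith) hmlb
          have h4 : (l * n) / (c₃ * n) = l / c₃ :=
            mul_div_mul_right l c₃ (ne_of_gt hnR0)
          linarith
        -- term 2
        have hnp' : (n:ℝ)/(p':ℝ) ≤ l := by rw [div_le_iff₀ hp'0]; nlinarith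
        have e1 : (m:ℝ) * (2*C*l*K/(p':ℝ) + (L:ℝ)*C*l*(η₀/2^j)) ≤
            (2*(c₃*n)) * (2*C*l*K/(p':ℝ)) + (2*(c₃*n)) * ((L:ℝ)*C*l*(η₀/2^j)) := by
          have t1 : (0:ℝ) ≤ 2*C*l*K/(p':ℝ) := by positivity
          have t2 : (0:ℝ) ≤ (L:ℝ)*C*l*(η₀/2^j) := by positivity
          nlinarith
        have e2 : (2*(c₃*(n:ℝ))) * (2*C*l*K/(p':ℝ)) ≤ K/2 := by
          have he : (2*(c₃*(n:ℝ))) * (2*C*l*K/(p':ℝ)) = (4*c₃*C*l*K)*((n:ℝ)/(p':ℝ)) := by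
            field_simp; ring
          have h7 : (4*c₃*C*l*K)*((n:ℝ)/(p':ℝ)) ≤ (4*c₃*C*l*K)*l := by
            refine mul_le_mul_of_nonneg_left hnp' ?_
            positivity
          have h8 : 4*c₃*C*l*l ≤ 1/2 := by
            have h9 : (0:ℝ) ≤ 8*c₃*C*l*l := by positivity
            nlinarith [mul_le_mul_of_nonneg_left hLR h9]
          have h10 : (4*c₃*C*l*K)*l ≤ K/2 := by nlinarith
          linarith [he.le, he.ge]
        have e3 : (2*(c₃*(n:ℝ))) * ((L:ℝ)*C*l*(η₀/2^j)) ≤ (η₀/2^(j+1))*n := by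
          have h9 : 2*c₃*(L:ℝ)*C*l ≤ 1/2 := by
            have hp9 : (0:ℝ) ≤ 2*c₃*(L:ℝ)*C*l := by positivity
            nlinarith
          have he : (2*(c₃*(n:ℝ))) * ((L:ℝ)*C*l*(η₀/2^j)) =
              (2*c₃*(L:ℝ)*C*l) * ((η₀/2^j)*n) := by ring
          have hnn : (0:ℝ) ≤ (η₀/2^j)*n := by positivity
          have he2 : (η₀/2^(j+1))*n = (1/2)*((η₀/2^j)*n) := by
            rw [pow_succ]; ring
          rw [he, he2]
          nlinarith
        calc AO.Gv a l n ≤ ((((q' - p') / m : ℕ) : ℝ) + 1) * 1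
              + (m : ℝ) * (2*C*l*K/(p':ℝ) + (L:ℝ)*C*l*(η₀/2^j)) := h5
          _ ≤ (l / c₃ + 1) + ((2*(c₃*n)) * (2*C*l*K/(p':ℝ))
              + (2*(c₃*n)) * ((L:ℝ)*C*l*(η₀/2^j))) := by linarith
          _ ≤ K/2 + K/2 + (η₀/2^(j+1))*n := by linarith
          _ = K + (η₀/2^(j+1))*n := by ring
  have hGK : ∀ k, AO.Gv a l k ≤ K := by
    intro k
    refine le_of_forall_pos_le_add fun δ hδ => ?_
    obtain ⟨j, hj⟩ := pow_unbounded_of_one_lt (R := ℝ) (η₀ * k / δ) one_lt_two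
    have h2j : (0:ℝ) < 2^j := by positivity
    rw [div_lt_iff₀ hδ] at hj
    have h3 : (η₀/2^j) * k ≤ δ := by
      rw [div_mul_eq_mul_div, div_le_iff₀ h2j]
      nlinarith
    linarith [hP j k]
  exact ⟨K, hK0, hGK⟩

set_option maxHeartbeats 8000000 in
lemma phase2 (a : ℕ → ℝ) (C l : ℝ) (hC : 1 < C) (hl : 1 < l)
    (hgm : ∀ n : ℕ, 1 ≤ n → ∑ k ∈ Finset.Icc n (2*n), |a k - a (k+1)| ≤
      C * ∑ k ∈ Finset.Icc ⌈(n:ℝ)/l⌉₊ ⌊l*(n:ℝ)⌋₊, |a k| / (k:ℝ))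
    (hcauchy : ∀ ε : ℝ, 0 < ε → ∃ N : ℕ, ∀ p q, N ≤ p → |Sv a p q| ≤ ε)
    (L : ℕ) (hL1 : 1 ≤ L) (hLR : (1:ℝ) ≤ (L:ℝ)) (hL : l * l ≤ (2:ℝ) ^ L)
    (K : ℝ) (hK0 : 0 ≤ K) (hGK : ∀ k : ℕ, AO.Gv a l k ≤ K) :
    Filter.Tendsto (AO.Gv a l) Filter.atTop (nhds 0) := by
  have hC0 : (0:ℝ) < C := by linarith
  have hl0 : (0:ℝ) < l := by linarith
  rw [Metric.tendsto_atTop]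
  intro ε' hε'
  obtain ⟨c₄, hc₄0, hc₄lb⟩ : ∃ c : ℝ, 0 < c ∧ l + 1 + 4*C*l*l*K ≤ c := by
    have h4K : (0:ℝ) ≤ 4*C*l*l*K := by positivity
    exact ⟨l + 1 + 4*C*l*l*K + 1, by nlinarith, by linarith⟩
  obtain ⟨ε, hε0, hε1, hsεub⟩ :
      ∃ ε : ℝ, 0 < ε ∧ ε ≤ 1 ∧ Real.sqrt ε ≤ ε'/(2*c₄) := by
    refine ⟨min 1 ((ε' / (2*c₄))^2), lt_min one_pos (by positivity), min_le_left _ _, ?_⟩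
    have h1 := Real.sqrt_le_sqrt (min_le_right 1 ((ε' / (2*c₄))^2))
    rwa [Real.sqrt_sq (by positivity : (0:ℝ) ≤ ε'/(2*c₄))] at h1
  obtain ⟨N₁, hN₁⟩ := hcauchy ε hε0
  have hsε : 0 < Real.sqrt ε := Real.sqrt_pos.mpr hε0
  obtain ⟨M₁, hM₁⟩ : ∃ M : ℕ, max (l * (N₁:ℝ)) (1 / Real.sqrt ε) ≤ (M:ℝ) :=
    ⟨⌈max (l * (N₁:ℝ)) (1 / Real.sqrt ε)⌉₊, Nat.le_ceil _⟩
  refine ⟨M₁ + 1, fun n hn => ?_⟩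
  have hn1 : 1 ≤ n := le_trans (Nat.le_add_left 1 M₁) hn
  have hnR0 : (0:ℝ) < n := by exact_mod_cast hn1
  have hmax : max (l * (N₁:ℝ)) (1 / Real.sqrt ε) ≤ (n:ℝ) := by
    refine le_trans hM₁ ?_
    exact_mod_cast le_trans (Nat.le_succ M₁) hn
  have hlN : l * N₁ ≤ (n:ℝ) := le_trans (le_max_left _ _) hmax
  have hinv : 1 / Real.sqrt ε ≤ (n:ℝ) := le_trans (le_max_right _ _) hmax
  have hsn : 1 ≤ Real.sqrt ε * n := by
    rw [div_le_iff₀ hsε] at hinv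
    nlinarith
  obtain ⟨m, hm1, hmlb, hmub⟩ :
      ∃ m : ℕ, 1 ≤ m ∧ Real.sqrt ε * n ≤ (m:ℝ) ∧ (m:ℝ) ≤ 2 * (Real.sqrt ε * n) := by
    refine ⟨⌈Real.sqrt ε * (n:ℝ)⌉₊, Nat.ceil_pos.mpr (by nlinarith), Nat.le_ceil _, ?_⟩
    have h6 := (Nat.ceil_lt_add_one (by positivity : (0:ℝ) ≤ Real.sqrt ε * (n:ℝ))).le
    linarith
  have hNp : N₁ ≤ ⌈(n:ℝ)/l⌉₊ := by
    have h1 : (N₁:ℝ) ≤ (n:ℝ) / l := by rw [le_div_iff₀ hl0]; nlinarith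
    have h2 : (N₁:ℝ) ≤ (⌈(n:ℝ)/l⌉₊:ℝ) := le_trans h1 (Nat.le_ceil _)
    exact_mod_cast h2
  have hH : ∀ k : ℕ, AO.Gv a l k ≤ K + 0 * k := fun k => by simpa using hGK k
  have h5 := AO.lemma5 a C l hC hl hgm L hL ε N₁ hN₁ K 0 hK0 le_rfl hH m hm1 n hn1 hNp
  have hp'lb : (n:ℝ)/l ≤ ((⌈(n:ℝ)/l⌉₊ : ℕ):ℝ) := Nat.le_ceil _
  have hq'ub : ((⌊l*(n:ℝ)⌋₊ : ℕ):ℝ) ≤ l * n := Nat.floor_le (by nlinarith)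
  generalize hg1 : (⌈(n:ℝ)/l⌉₊ : ℕ) = p' at h5 hp'lb
  generalize hg2 : (⌊l*(n:ℝ)⌋₊ : ℕ) = q' at h5 hq'ub
  clear hg1 hg2
  have hp'0 : (0:ℝ) < p' := lt_of_lt_of_le (div_pos hnR0 hl0) hp'lb
  have hnlp' : (n:ℝ) ≤ l * p' := by
    rw [div_le_iff₀ hl0] at hp'lb; nlinarith
  have hnp' : (n:ℝ)/(p':ℝ) ≤ l := by rw [div_le_iff₀ hp'0]; nlinarith
  have hA : (((q' - p') / m : ℕ) : ℝ) ≤ l / Real.sqrt ε := by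
    have h1 : (((q' - p') / m : ℕ) : ℝ) ≤ ((q' - p' : ℕ):ℝ) / (m:ℝ) := Nat.cast_div_le
    have h2 : ((q' - p' : ℕ):ℝ) ≤ (q':ℝ) := by exact_mod_cast Nat.sub_le q' p'
    have h3 : ((q' - p' : ℕ):ℝ) / (m:ℝ) ≤ (l * n) / (Real.sqrt ε * n) := by
      apply div_le_div₀ (by nlinarith) (h2.trans hq'ub) (by nlinarith) hmlb
    have h4 : (l * n) / (Real.sqrt ε * n) = l / Real.sqrt ε :=
      mul_div_mul_right l (Real.sqrt ε) (ne_of_gt hnR0)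
    linarith
  have hterm1 : ((((q' - p') / m : ℕ) : ℝ) + 1) * ε ≤ l * Real.sqrt ε + Real.sqrt ε := by
    have h1 : ((((q' - p') / m : ℕ) : ℝ) + 1) * ε ≤ (l / Real.sqrt ε + 1) * ε := by
      nlinarith [hA, hε0.le]
    have h2 : (l / Real.sqrt ε + 1) * ε = l * (ε / Real.sqrt ε) + ε := by ring
    have h3 : ε / Real.sqrt ε = Real.sqrt ε := Real.div_sqrt
    have h4 : ε ≤ Real.sqrt ε := by
      have h5 : Real.sqrt ε ≤ 1 := by
        have hs1 := Real.sqrt_le_sqrt hε1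
        rwa [Real.sqrt_one] at hs1
      have h6 : Real.sqrt ε * Real.sqrt ε = ε := Real.mul_self_sqrt hε0.le
      nlinarith
    rw [h2, h3] at h1
    linarith
  have hterm2 : (m:ℝ) * (2*C*l*K/(p':ℝ) + (L:ℝ)*C*l*0) ≤ 4*C*l*l*K*Real.sqrt ε := by
    have t1 : (0:ℝ) ≤ 2*C*l*K/(p':ℝ) := by positivity
    have e0 : (m:ℝ) * (2*C*l*K/(p':ℝ) + (L:ℝ)*C*l*0) = (m:ℝ) * (2*C*l*K/(p':ℝ)) := by ring
    have e1 : (m:ℝ) * (2*C*l*K/(p':ℝ)) ≤ (2*(Real.sqrt ε*n)) * (2*C*l*K/(p':ℝ)) :=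
      mul_le_mul_of_nonneg_right hmub t1
    have he : (2*(Real.sqrt ε*(n:ℝ))) * (2*C*l*K/(p':ℝ))
        = (4*Real.sqrt ε*C*l*K)*((n:ℝ)/(p':ℝ)) := by field_simp; ring
    have h7 : (4*Real.sqrt ε*C*l*K)*((n:ℝ)/(p':ℝ)) ≤ (4*Real.sqrt ε*C*l*K)*l := by
      refine mul_le_mul_of_nonneg_left hnp' ?_
      positivity
    rw [e0]
    calc (m:ℝ) * (2*C*l*K/(p':ℝ)) ≤ (2*(Real.sqrt ε*n)) * (2*C*l*K/(p':ℝ)) := e1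
      _ = (4*Real.sqrt ε*C*l*K)*((n:ℝ)/(p':ℝ)) := he
      _ ≤ (4*Real.sqrt ε*C*l*K)*l := h7
      _ = 4*C*l*l*K*Real.sqrt ε := by ring
  have htot : AO.Gv a l n ≤ c₄ * (ε'/(2*c₄)) := by
    have h1 : AO.Gv a l n ≤ (l + 1 + 4*C*l*l*K) * Real.sqrt ε := by
      have := h5
      nlinarith [hterm1, hterm2]
    have h2 : (l + 1 + 4*C*l*l*K) * Real.sqrt ε ≤ c₄ * Real.sqrt ε :=
      mul_le_mul_of_nonneg_right hc₄lb hsε.le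
    have h3 : c₄ * Real.sqrt ε ≤ c₄ * (ε'/(2*c₄)) :=
      mul_le_mul_of_nonneg_left hsεub hc₄0.le
    linarith
  have hfin : AO.Gv a l n ≤ ε'/2 := by
    have : c₄ * (ε'/(2*c₄)) = ε'/2 := by field_simp
    linarith
  rw [Real.dist_eq, abs_of_nonneg (by linarith [AO.Gv_nonneg a l n] : (0:ℝ) ≤ AO.Gv a l n - 0)]
  linarith


end AO

set_option maxHeartbeats 2000000 in
/-- Abel–Olivier test for general monotone sequences: if `(a_n)` is a real-valued general
monotone sequence with constants `C > 1`, `λ > 1`, and `∑ a_n` converges, then `n·a_n → 0`. -/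
theorem abel_olivier_GMSeq (a : ℕ → ℝ) (C l : ℝ) (hC : 1 < C) (hl : 1 < l)
    (hGM : GMSeq C l a)
    (hconv : ∃ S : ℝ, Tendsto (fun N : ℕ => ∑ n ∈ Finset.range N, a n) atTop (nhds S)) :
    Tendsto (fun n : ℕ => (n : ℝ) * a n) atTop (nhds 0) := by
  obtain ⟨htend, hgm⟩ := hGM
  have hC0 : (0:ℝ) < C := by linarith
  have hl0 : (0:ℝ) < l := by linarith
  have hcauchy := AO.cauchy a hconv
  obtain ⟨B, hB⟩ : ∃ B : ℝ, ∀ k, |a k| ≤ B := by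
    obtain ⟨B, hB⟩ := (htend.abs).bddAbove_range
    exact ⟨B, fun k => hB (Set.mem_range_self k)⟩
  obtain ⟨L, hL1, hLR, hL⟩ :
      ∃ L : ℕ, 1 ≤ L ∧ (1:ℝ) ≤ (L:ℝ) ∧ l * l ≤ (2:ℝ) ^ L := by
    refine ⟨⌈l * l⌉₊, Nat.ceil_pos.mpr (by nlinarith), ?_, ?_⟩
    · have h0 : 1 ≤ ⌈l * l⌉₊ := Nat.ceil_pos.mpr (by nlinarith)
      exact_mod_cast h0
    · have h1 : l * l ≤ (⌈l * l⌉₊:ℝ) := Nat.le_ceil _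
      have h3 := (Nat.lt_two_pow_self (n := ⌈l * l⌉₊)).le
      have h2 : ((⌈l * l⌉₊:ℕ):ℝ) ≤ (2:ℝ)^(⌈l * l⌉₊:ℕ) := by
        calc ((⌈l * l⌉₊:ℕ):ℝ) ≤ ((2^(⌈l * l⌉₊:ℕ) : ℕ):ℝ) := by exact_mod_cast h3
          _ = (2:ℝ)^(⌈l * l⌉₊:ℕ) := by push_cast; ring
      linarith
  obtain ⟨K, hK0, hGK⟩ := AO.phase1 a C l hC hl hgm hcauchy B hB L hL1 hLR hL
  have hGto := AO.phase2 a C l hC hl hgm hcauchy L hL1 hLR hL K hK0 hGK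
  -- Phase 3 : conclusion
  have hfin : ∀ n : ℕ, |(n:ℝ) * a n| ≤ |AO.Sv a (n+1) (2*n)| + C * l * AO.Gv a l n := by
    intro n
    rcases Nat.eq_zero_or_pos n with rfl | hn1
    · simp only [Nat.cast_zero, zero_mul, abs_zero]
      have h1 : 0 ≤ AO.Gv a l 0 := AO.Gv_nonneg a l 0
      have h2 : 0 ≤ |AO.Sv a (0+1) (2*0)| := abs_nonneg _
      have h3 : 0 ≤ C * l * AO.Gv a l 0 := mul_nonneg (mul_nonneg hC0.le hl0.le) h1
      linarith
    · have hcard : (Finset.Icc (n+1) (2*n)).card = n := by rw [Nat.card_Icc]; omega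
      have hid : (n:ℝ) * a n - AO.Sv a (n+1) (2*n)
          = ∑ k ∈ Finset.Icc (n+1) (2*n), (a n - a k) := by
        rw [Finset.sum_sub_distrib, Finset.sum_const, hcard, nsmul_eq_mul, AO.Sv]
      have h2 : |∑ k ∈ Finset.Icc (n+1) (2*n), (a n - a k)| ≤ (n:ℝ) * AO.Aa a n := by
        refine le_trans (Finset.abs_sum_le_sum_abs _ _) ?_
        have hper : ∀ k ∈ Finset.Icc (n+1) (2*n), |a n - a k| ≤ AO.Vv a n (2*n+1) := by
          intro k hk
          have hm := Finset.mem_Icc.mp hk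
          exact AO.diff_le a le_rfl (by omega) (by omega)
        have hVA : AO.Vv a n (2*n+1) = AO.Aa a n := by
          rw [AO.Vv, AO.Aa, Finset.Ico_add_one_right_eq_Icc]
        rw [hVA] at hper
        have h3 := Finset.sum_le_card_nsmul _ _ _ hper
        rw [hcard, nsmul_eq_mul] at h3
        exact h3
      have h3 := AO.lemma3 a C l hC hl hgm n hn1
      have hn0 : (0:ℝ) < n := by exact_mod_cast hn1
      have h4 : (n:ℝ) * AO.Aa a n ≤ C * l * AO.Gv a l n := by
        have h5 := mul_le_mul_of_nonneg_left h3 hn0.le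
        have h6 : (n:ℝ) * (C * l / n * AO.Gv a l n) = C * l * AO.Gv a l n := by
          field_simp
        linarith
      have h7 : |(n:ℝ) * a n| ≤ |∑ k ∈ Finset.Icc (n+1) (2*n), (a n - a k)|
          + |AO.Sv a (n+1) (2*n)| := by
        have e : (n:ℝ) * a n = (∑ k ∈ Finset.Icc (n+1) (2*n), (a n - a k))
            + AO.Sv a (n+1) (2*n) := by rw [← hid]; ring
        rw [e]
        exact abs_add_le _ _
      linarith
  have hSvto : Tendsto (fun n : ℕ => |AO.Sv a (n+1) (2*n)|) atTop (nhds 0) := by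
    rw [Metric.tendsto_atTop]
    intro ε' hε'
    obtain ⟨N, hN⟩ := AO.cauchy a hconv (ε'/2) (by linarith)
    refine ⟨N, fun n hn => ?_⟩
    have h1 := hN (n+1) (2*n) (by omega)
    rw [Real.dist_eq, sub_zero, abs_abs]
    linarith
  have hgto : Tendsto (fun n : ℕ => |AO.Sv a (n+1) (2*n)| + C * l * AO.Gv a l n)
      atTop (nhds 0) := by
    have hmul := hGto.const_mul (C*l)
    have hadd := hSvto.add hmul
    simpa using hadd
  have hnorm : ∀ n : ℕ, ‖(n:ℝ) * a n‖ ≤ |AO.Sv a (n+1) (2*n)| + C * l * AO.Gv a l n := by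
    intro n
    rw [Real.norm_eq_abs]
    exact hfin n
  exact squeeze_zero_norm hnorm hgto
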